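/- Let $0<t<p\le 2$ and $x\in\mathbb{R}^\Lambda$ with $\|x\|_{k_t}<\infty$. Then for all $\alpha>0$, $\|x-T_\alpha(x)\|_{\omega_p,p} \le 2(2^{p-t}-1)^{-1/p}\,\|x\|_{k_t}^{t/p}\,\alpha^{(p-t)/p}$. -/

import Mathlib

open scoped ENNReal
noncomputable section

variable {Λ : Type*}

/-- Weighted `ℓ^p` quasi-norm (value in `ℝ≥0∞`). -/
def wnorm (ω : Λ → ℝ) (p : ℝ) (x : Λ → ℝ) : ℝ≥0∞ :=
  (∑' j, ENNReal.ofReal (ω j ^ p * |x j| ^ p)) ^ (1 / p)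

/-- The interpolating weights `(ω_t)_j = (a_j^{2t-2} r_j^{2-t})^{1/t}`. -/
def omegaWeight (a r : Λ → ℝ) (t : ℝ) : Λ → ℝ :=
  fun j => (a j ^ (2 * t - 2) * r j ^ (2 - t)) ^ (1 / t)

/-- Weighted `ℓ¹` norm `‖x‖_{r,1} = ∑ r_j |x_j|`. -/
def rnorm1 (r : Λ → ℝ) (x : Λ → ℝ) : ℝ≥0∞ := ∑' j, ENNReal.ofReal (r j * |x j|)

/-- Weighted `ℓ²` norm `‖x‖_{a,2} = (∑ a_j² x_j²)^{1/2}`. -/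
def anorm2 (a : Λ → ℝ) (x : Λ → ℝ) : ℝ≥0∞ :=
  (∑' j, ENNReal.ofReal (a j ^ 2 * x j ^ 2)) ^ ((1 : ℝ) / 2)

/-- The sum `∑_j a_j⁻² r_j² 𝟙_{a_j⁻² r_j α < |x_j|}`. -/
def kSum (a r : Λ → ℝ) (α : ℝ) (x : Λ → ℝ) : ℝ≥0∞ :=
  ∑' j, ENNReal.ofReal (if r j * α / a j ^ 2 < |x j| then r j ^ 2 / a j ^ 2 else 0)

/-- The weak quasi-norm `‖x‖_{k_t} = sup_{α>0} α (kSum α x)^{1/t}`. -/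
def knorm (a r : Λ → ℝ) (t : ℝ) (x : Λ → ℝ) : ℝ≥0∞ :=
  ⨆ α ∈ Set.Ioi (0 : ℝ), ENNReal.ofReal α * (kSum a r α x) ^ (1 / t)

/-- Hard thresholding operator. -/
def Tthresh (a r : Λ → ℝ) (α : ℝ) (x : Λ → ℝ) : Λ → ℝ :=
  fun j => if r j * α / a j ^ 2 < |x j| then x j else 0

lemma alg1 (a r X p : ℝ) (ha : 0 < a) (hrr : 0 < r) (hX : 0 ≤ X) (hp : 0 < p) :
    (a ^ (2*p-2) * r ^ (2-p)) * X ^ p = r^2/a^2 * (a^2 * X / r) ^ p := by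
  rcases hX.eq_or_lt with h|h
  · simp [← h, Real.zero_rpow hp.ne']
  · rw [Real.div_rpow (by positivity) hrr.le, Real.mul_rpow (by positivity) hX,
      ← Real.rpow_natCast a 2, ← Real.rpow_natCast r 2, ← Real.rpow_mul ha.le,
      Real.rpow_sub ha, Real.rpow_sub hrr]
    push_cast
    field_simp

lemma geom_term (α p t : ℝ) (hα : 0 < α) (k : ℕ) :
    (α * 2^(-(k:ℝ)))^p * (α * 2^(-(k:ℝ)-1))^(-t)
      = α^(p-t) * (2^t * ((2:ℝ)^(-(p-t)))^(k:ℕ)) := by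
  have h2 : (0:ℝ) < 2 := two_pos
  rw [Real.mul_rpow hα.le (by positivity), Real.mul_rpow hα.le (by positivity),
    ← Real.rpow_natCast ((2:ℝ)^(-(p-t))) k, ← Real.rpow_mul h2.le,
    ← Real.rpow_mul h2.le, ← Real.rpow_mul h2.le]
  rw [show α ^ p * 2 ^ (-(k:ℝ) * p) * (α ^ (-t) * 2 ^ ((-(k:ℝ) - 1) * -t))
      = (α ^ p * α ^ (-t)) * (2 ^ (-(k:ℝ) * p) * 2 ^ ((-(k:ℝ) - 1) * -t) : ℝ) from by ring,
    ← Real.rpow_add hα, ← Real.rpow_add h2, ← Real.rpow_add h2]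
  congr 1 <;> ring

lemma const_calc (α p t : ℝ) (hα : 0 < α) (ht : 0 < t) (htp : t < p) :
    (α^(p-t) * (2^t * (1 - (2:ℝ) ^ (-(p-t)))⁻¹))^(1/p)
      = 2 * (2 ^ (p-t) - 1) ^ (-(1/p)) * α ^ ((p-t)/p) := by
  have hp : 0 < p := ht.trans htp
  have h1 : (1:ℝ) < 2 ^ (p-t) :=
    Real.one_lt_rpow_iff_of_pos two_pos |>.2 (Or.inl ⟨one_lt_two, by linarith⟩)
  have hpos : (0:ℝ) < 2^(p-t) - 1 := by linarith
  have key : (2:ℝ)^t * (1 - (2:ℝ) ^ (-(p-t)))⁻¹ = 2^p / (2^(p-t) - 1) := by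
    rw [Real.rpow_neg (by norm_num : (0:ℝ) ≤ 2)]
    rw [show (1 - ((2:ℝ)^(p-t))⁻¹) = (2^(p-t) - 1) / 2^(p-t) from by field_simp]
    rw [inv_div, show (2:ℝ)^p = 2^t * 2^(p-t) from by rw [← Real.rpow_add two_pos]; ring_nf]
    field_simp
  rw [key, Real.mul_rpow (by positivity) (by positivity),
    Real.div_rpow (by positivity) hpos.le,
    ← Real.rpow_mul hα.le, ← Real.rpow_mul (by norm_num : (0:ℝ) ≤ 2),
    Real.rpow_neg hpos.le]
  rw [show p * (1/p) = 1 from by field_simp, Real.rpow_one, div_eq_mul_inv]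
  ring

lemma shell_lemma (α u : ℝ) (hα : 0 < α) (hu : 0 < u) (hle : u ≤ α) :
    ∃ k : ℕ, (α * 2^(-(k:ℝ)-1) < u ∧ u ≤ α * 2^(-(k:ℝ))) ∧
      ∀ m : ℕ, m ≠ k → ¬(α * 2^(-(m:ℝ)-1) < u ∧ u ≤ α * 2^(-(m:ℝ))) := by
  have h2 : (1:ℝ) < 2 := one_lt_two
  set y := α / u with hy
  have hy1 : 1 ≤ y := (one_le_div hu).2 hle
  have hy0 : 0 < y := by positivity
  have key : ∀ m : ℕ, ((α * 2^(-(m:ℝ)-1) < u ∧ u ≤ α * 2^(-(m:ℝ))) ↔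
      ((2:ℝ)^(m:ℝ) ≤ y ∧ y < 2^((m:ℝ)+1))) := by
    intro m
    have p1 : (0:ℝ) < 2 ^ ((m:ℝ)+1) := by positivity
    have p2 : (0:ℝ) < (2:ℝ) ^ ((m:ℝ)) := by positivity
    have e1 : (2:ℝ)^(-(m:ℝ)-1) = (2^((m:ℝ)+1))⁻¹ := by
      rw [show -(m:ℝ)-1 = -((m:ℝ)+1) from by ring, Real.rpow_neg (by norm_num)]
    have e2 : (2:ℝ)^(-(m:ℝ)) = ((2:ℝ)^((m:ℝ)))⁻¹ := Real.rpow_neg (by norm_num) _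
    have c1 : α * (2^((m:ℝ)+1))⁻¹ < u ↔ y < 2^((m:ℝ)+1) := by
      rw [← div_eq_mul_inv, div_lt_iff₀ p1, hy, div_lt_iff₀ hu, mul_comm]
    have c2 : u ≤ α * ((2:ℝ)^((m:ℝ)))⁻¹ ↔ (2:ℝ)^(m:ℝ) ≤ y := by
      rw [← div_eq_mul_inv, le_div_iff₀ p2, hy, le_div_iff₀ hu, mul_comm]
    rw [e1, e2, c1, c2, and_comm]
  set k := ⌊Real.logb 2 y⌋₊ with hk
  have hlog0 : 0 ≤ Real.logb 2 y := Real.logb_nonneg h2 hy1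
  have hkle : (k:ℝ) ≤ Real.logb 2 y := Nat.floor_le hlog0
  have hklt : Real.logb 2 y < (k:ℝ) + 1 := Nat.lt_floor_add_one _
  have hlb : (2:ℝ) ^ (k:ℝ) ≤ y := by
    calc (2:ℝ) ^ (k:ℝ) ≤ 2 ^ Real.logb 2 y := (Real.rpow_le_rpow_left_iff h2).2 hkle
    _ = y := Real.rpow_logb two_pos (by norm_num) hy0
  have hub : y < (2:ℝ) ^ ((k:ℝ)+1) := by
    calc y = 2 ^ Real.logb 2 y := (Real.rpow_logb two_pos (by norm_num) hy0).symm
    _ < 2 ^ ((k:ℝ)+1) := (Real.rpow_lt_rpow_left_iff h2).2 hklt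
  refine ⟨k, (key k).2 ⟨hlb, hub⟩, ?_⟩
  intro m hm hcon
  obtain ⟨hm1, hm2⟩ := (key m).1 hcon
  rcases hm.lt_or_gt with h | h
  · have h' : ((m:ℝ)+1) ≤ (k:ℝ) := by exact_mod_cast h
    have := (Real.rpow_le_rpow_left_iff h2).2 h'
    linarith
  · have h' : ((k:ℝ)+1) ≤ (m:ℝ) := by exact_mod_cast h
    have := (Real.rpow_le_rpow_left_iff h2).2 h'
    linarith

theorem stmt2 (a r : Λ → ℝ) (ha : ∀ j, 0 < a j) (hr : ∀ j, 0 < r j)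
    (t p : ℝ) (ht : 0 < t) (htp : t < p) (hp : p ≤ 2)
    (x : Λ → ℝ) (hx : knorm a r t x ≠ ⊤) (α : ℝ) (hα : 0 < α) :
    wnorm (omegaWeight a r p) p (x - Tthresh a r α x) ≤
      ENNReal.ofReal (2 * (2 ^ (p - t) - 1) ^ (-(1 / p))) *
        knorm a r t x ^ (t / p) * ENNReal.ofReal (α ^ ((p - t) / p)) := by
  have hp0 : 0 < p := ht.trans htp
  have hpt : 0 < p - t := by linarith
  set M := knorm a r t x with hM
  set u : Λ → ℝ := fun j => a j ^ 2 * |x j| / r j with hudef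
  have hu0 : ∀ j, 0 ≤ u j := fun j => div_nonneg (by positivity) (hr j).le
  have hcond : ∀ (β : ℝ) (j : Λ), (r j * β / a j ^ 2 < |x j|) ↔ β < u j := by
    intro β j
    have ha2 : (0:ℝ) < a j ^ 2 := by have := ha j; positivity
    rw [div_lt_iff₀ ha2, hudef]
    simp only
    rw [lt_div_iff₀ (hr j)]
    constructor <;> intro h <;> nlinarith
  set w : Λ → ℝ := fun j => r j ^ 2 / a j ^ 2 with hwdef
  have hw0 : ∀ j, 0 ≤ w j := fun j => div_nonneg (by positivity) (by positivity)
  -- Step A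
  have hA : wnorm (omegaWeight a r p) p (x - Tthresh a r α x)
      = (∑' j, if α < u j then 0 else ENNReal.ofReal (w j * u j ^ p)) ^ (1/p) := by
    unfold wnorm
    congr 1
    apply tsum_congr; intro j
    simp only [Pi.sub_apply, Tthresh, omegaWeight]
    by_cases hj : r j * α / a j ^ 2 < |x j|
    · rw [if_pos hj, if_pos ((hcond α j).1 hj)]
      simp [Real.zero_rpow hp0.ne']
    · rw [if_neg hj, if_neg (fun hh => hj ((hcond α j).2 hh)), sub_zero]
      congr 1
      rw [← Real.rpow_mul
        (mul_nonneg (Real.rpow_nonneg (ha j).le _) (Real.rpow_nonneg (hr j).le _)),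
        one_div, inv_mul_cancel₀ hp0.ne', Real.rpow_one]
      exact alg1 (a j) (r j) |x j| p (ha j) (hr j) (abs_nonneg _) hp0
  -- shells
  set g : ℕ → Λ → ℝ≥0∞ := fun k j =>
    if α * 2^(-(k:ℝ)-1) < u j ∧ u j ≤ α * 2^(-(k:ℝ)) then ENNReal.ofReal (w j * u j ^ p) else 0
    with hgdef
  have hpart : ∀ j, (if α < u j then 0 else ENNReal.ofReal (w j * u j ^ p)) = ∑' k, g k j := by
    intro j
    by_cases hj : α < u j
    · rw [if_pos hj]
      symm
      rw [ENNReal.tsum_eq_zero]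
      intro k
      rw [hgdef]
      simp only
      rw [if_neg]
      rintro ⟨-, h2'⟩
      have hle1 : (2:ℝ)^(-(k:ℝ)) ≤ 1 :=
        Real.rpow_le_one_of_one_le_of_nonpos one_le_two (neg_nonpos.2 (Nat.cast_nonneg k))
      have : α * 2^(-(k:ℝ)) ≤ α := mul_le_of_le_one_right hα.le hle1
      linarith
    · rw [if_neg hj]
      push_neg at hj
      rcases (hu0 j).eq_or_lt with h0 | h0
      · have hz : ENNReal.ofReal (w j * u j ^ p) = 0 := by
          rw [← h0, Real.zero_rpow hp0.ne', mul_zero, ENNReal.ofReal_zero]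
        rw [hz]
        symm
        rw [ENNReal.tsum_eq_zero]
        intro k
        rw [hgdef]
        simp only
        rw [if_neg]
        rintro ⟨h1', -⟩
        have : (0:ℝ) < α * 2^(-(k:ℝ)-1) := by positivity
        rw [← h0] at h1'
        linarith
      · obtain ⟨k, hk, huniq⟩ := shell_lemma α (u j) hα h0 hj
        symm
        rw [tsum_eq_single k (fun m hm => by rw [hgdef]; simp only; exact if_neg (huniq m hm))]
        rw [hgdef]
        simp only
        exact if_pos hk
  -- Step B: weak bound on kSum
  have hB : ∀ β : ℝ, 0 < β → kSum a r β x ≤ M^t * ENNReal.ofReal (β ^ (-t)) := by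
    intro β hβ
    have h1 : ENNReal.ofReal β * (kSum a r β x) ^ (1/t) ≤ M := by
      rw [hM, knorm]
      exact le_biSup (fun β : ℝ => ENNReal.ofReal β * (kSum a r β x) ^ (1/t)) (Set.mem_Ioi.2 hβ)
    have hβ0 : ENNReal.ofReal β ≠ 0 := by
      simp [ENNReal.ofReal_eq_zero, not_le, hβ]
    rw [mul_comm] at h1
    have h2 : (kSum a r β x) ^ (1/t) ≤ M / ENNReal.ofReal β :=
      (ENNReal.le_div_iff_mul_le (Or.inl hβ0) (Or.inl ENNReal.ofReal_ne_top)).2 h1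
    have h3 : ((kSum a r β x) ^ (1/t)) ^ t ≤ (M / ENNReal.ofReal β) ^ t :=
      ENNReal.rpow_le_rpow h2 ht.le
    rw [← ENNReal.rpow_mul, one_div, inv_mul_cancel₀ ht.ne', ENNReal.rpow_one] at h3
    calc kSum a r β x ≤ (M / ENNReal.ofReal β) ^ t := h3
      _ = M ^ t * ENNReal.ofReal (β ^ (-t)) := by
          rw [div_eq_mul_inv, ENNReal.mul_rpow_of_nonneg _ _ ht.le, ENNReal.inv_rpow,
            ENNReal.ofReal_rpow_of_pos hβ,
            ← ENNReal.ofReal_inv_of_pos (Real.rpow_pos_of_pos hβ t),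
            ← Real.rpow_neg hβ.le]
  -- inner sum bound
  have hInner : ∀ k : ℕ, (∑' j, g k j)
      ≤ ENNReal.ofReal ((α * 2^(-(k:ℝ)))^p) * kSum a r (α * 2^(-(k:ℝ)-1)) x := by
    intro k
    have hks : kSum a r (α * 2^(-(k:ℝ)-1)) x
        = ∑' j, (if α * 2^(-(k:ℝ)-1) < u j then ENNReal.ofReal (w j) else 0) := by
      unfold kSum
      apply tsum_congr
      intro j
      rw [show (if r j * (α * 2^(-(k:ℝ)-1)) / a j ^ 2 < |x j| then r j ^ 2 / a j ^ 2 else 0)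
          = (if α * 2^(-(k:ℝ)-1) < u j then r j ^ 2 / a j ^ 2 else 0) from
        if_congr (hcond _ j) rfl rfl]
      split_ifs <;> simp [hwdef]
    rw [hks, ← ENNReal.tsum_mul_left]
    apply ENNReal.tsum_le_tsum
    intro j
    rw [hgdef]
    simp only
    by_cases hs : α * 2^(-(k:ℝ)-1) < u j ∧ u j ≤ α * 2^(-(k:ℝ))
    · rw [if_pos hs, if_pos hs.1, ← ENNReal.ofReal_mul (by positivity)]
      apply ENNReal.ofReal_le_ofReal
      rw [mul_comm (w j)]
      exact mul_le_mul_of_nonneg_right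
        (Real.rpow_le_rpow (hu0 j) hs.2 hp0.le) (hw0 j)
    · rw [if_neg hs]
      exact zero_le ..
  -- per-shell bound
  set q : ℝ := (2:ℝ) ^ (-(p-t)) with hqdef
  have hq0 : 0 < q := Real.rpow_pos_of_pos two_pos _
  have hq1 : q < 1 := by
    rw [hqdef, Real.rpow_neg (by norm_num : (0:ℝ) ≤ 2)]
    have h1 : (1:ℝ) < 2 ^ (p-t) :=
      Real.one_lt_rpow_iff_of_pos two_pos |>.2 (Or.inl ⟨one_lt_two, hpt⟩)
    exact inv_lt_one_of_one_lt₀ h1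
  have hkterm : ∀ k : ℕ, ENNReal.ofReal ((α * 2^(-(k:ℝ)))^p) * kSum a r (α * 2^(-(k:ℝ)-1)) x
      ≤ M^t * (ENNReal.ofReal (α^(p-t) * 2^t) * ENNReal.ofReal q ^ k) := by
    intro k
    have hb : (0:ℝ) < α * 2^(-(k:ℝ)-1) := by positivity
    calc ENNReal.ofReal ((α * 2^(-(k:ℝ)))^p) * kSum a r (α * 2^(-(k:ℝ)-1)) x
        ≤ ENNReal.ofReal ((α * 2^(-(k:ℝ)))^p)
            * (M^t * ENNReal.ofReal ((α * 2^(-(k:ℝ)-1)) ^ (-t))) :=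
          mul_le_mul' le_rfl (hB _ hb)
      _ = M^t * (ENNReal.ofReal (α^(p-t) * 2^t) * ENNReal.ofReal q ^ k) := by
          rw [← mul_assoc, mul_comm (ENNReal.ofReal _) (M^t), mul_assoc,
            ← ENNReal.ofReal_mul (by positivity), geom_term α p t hα k,
            ← ENNReal.ofReal_pow hq0.le, ← ENNReal.ofReal_mul (by positivity), hqdef,
            mul_assoc]
  -- assemble
  have hsum : (∑' j, if α < u j then 0 else ENNReal.ofReal (w j * u j ^ p))
      ≤ M^t * (ENNReal.ofReal (α^(p-t) * 2^t) * (1 - ENNReal.ofReal q)⁻¹) := by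
    calc (∑' j, if α < u j then 0 else ENNReal.ofReal (w j * u j ^ p))
        = ∑' j, ∑' k, g k j := tsum_congr hpart
      _ = ∑' k, ∑' j, g k j := ENNReal.tsum_comm
      _ ≤ ∑' k, M^t * (ENNReal.ofReal (α^(p-t) * 2^t) * ENNReal.ofReal q ^ k) :=
          ENNReal.tsum_le_tsum (fun k => (hInner k).trans (hkterm k))
      _ = M^t * (ENNReal.ofReal (α^(p-t) * 2^t) * ∑' k, ENNReal.ofReal q ^ k) := by
          rw [ENNReal.tsum_mul_left, ENNReal.tsum_mul_left]
      _ = _ := by rw [ENNReal.tsum_geometric]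
  -- convert geometric factor to ofReal
  have hgeo : (1 - ENNReal.ofReal q)⁻¹ = ENNReal.ofReal ((1 - q)⁻¹) := by
    rw [← ENNReal.ofReal_one, ← ENNReal.ofReal_sub _ hq0.le,
      ENNReal.ofReal_inv_of_pos (by linarith)]
  have hCpos : (0:ℝ) < α^(p-t) * (2^t * (1-q)⁻¹) := by
    have h1 : (0:ℝ) < 1 - q := by linarith
    have h2 : (0:ℝ) < α^(p-t) := Real.rpow_pos_of_pos hα _
    have h3 : (0:ℝ) < (2:ℝ)^t := Real.rpow_pos_of_pos two_pos _
    positivity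
  have hfinal : wnorm (omegaWeight a r p) p (x - Tthresh a r α x)
      ≤ (M^t * ENNReal.ofReal (α^(p-t) * (2^t * (1-q)⁻¹))) ^ (1/p) := by
    rw [hA]
    apply ENNReal.rpow_le_rpow _ (by positivity)
    calc _ ≤ M^t * (ENNReal.ofReal (α^(p-t) * 2^t) * (1 - ENNReal.ofReal q)⁻¹) := hsum
      _ = M^t * ENNReal.ofReal (α^(p-t) * (2^t * (1-q)⁻¹)) := by
          rw [hgeo, ← ENNReal.ofReal_mul (by positivity), mul_assoc]
  refine hfinal.trans (le_of_eq ?_)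
  rw [ENNReal.mul_rpow_of_nonneg _ _ (by positivity : (0:ℝ) ≤ 1/p),
    ← ENNReal.rpow_mul, ENNReal.ofReal_rpow_of_pos hCpos, hqdef, const_calc α p t hα ht htp,
    ENNReal.ofReal_mul (mul_nonneg two_pos.le (Real.rpow_nonneg (by
      have h1 : (1:ℝ) < 2 ^ (p-t) :=
        Real.one_lt_rpow_iff_of_pos two_pos |>.2 (Or.inl ⟨one_lt_two, hpt⟩)
      linarith) _)), show t * (1/p) = t/p from by ring]
  ring
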